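/- Let φ, ψ : ℝ → ℂ be continuous even functions such that |φ| and |ψ| are strictly increasing on (0,∞) and |φ(t)|/|ψ(t)| is non-increasing on (0,∞). Fix b > 0 and let φ_b and N(b) be as defined. Then for every finite Borel measure μ on ℝ with ∫|ψ|² dμ < ∞, one has √(∫ℝ |φ(t)|² dμ(t)) ≤ (|φ(b)|/|ψ(b)|)·√(∫ℝ |ψ(t)|² dμ(t)) + N(b)·√(μ(ℝ)). -/

import Mathlib

open MeasureTheory

/-- The truncation `φ_b(t) = φ(t) − (φ(b)/ψ(b))·ψ(t)` for `|t| ≤ b`, `0` otherwise. -/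
noncomputable def phib (φ ψ : ℝ → ℂ) (b : ℝ) : ℝ → ℂ :=
  fun t => if |t| ≤ b then φ t - (φ b / ψ b) * ψ t else 0

/-- `N(b) = sup_{t ∈ ℝ} |φ_b(t)|`. -/
noncomputable def Nb (φ ψ : ℝ → ℂ) (b : ℝ) : ℝ :=
  ⨆ t : ℝ, ‖phib φ ψ b t‖

/-- **Additive Hardy–Littlewood–Pólya type inequality in integral form.** For
every finite Borel measure `μ` on `ℝ` with `∫ |ψ|² dμ < ∞`,
`√(∫ |φ|² dμ) ≤ (|φ(b)|/|ψ(b)|)·√(∫ |ψ|² dμ) + N(b)·√(μ(ℝ))`. -/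
theorem additive_hlp_integral_form
    (φ ψ : ℝ → ℂ) (hφc : Continuous φ) (hψc : Continuous ψ)
    (hφe : ∀ t : ℝ, φ (-t) = φ t) (hψe : ∀ t : ℝ, ψ (-t) = ψ t)
    (hφm : StrictMonoOn (fun t => ‖φ t‖) (Set.Ioi (0 : ℝ)))
    (hψm : StrictMonoOn (fun t => ‖ψ t‖) (Set.Ioi (0 : ℝ)))
    (hratio : AntitoneOn (fun t => ‖φ t‖ / ‖ψ t‖) (Set.Ioi (0 : ℝ)))
    (b : ℝ) (hb : 0 < b)
    (μ : Measure ℝ) [IsFiniteMeasure μ]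
    (hψ2 : Integrable (fun t => ‖ψ t‖ ^ 2) μ) :
    Real.sqrt (∫ t, ‖φ t‖ ^ 2 ∂μ)
      ≤ (‖φ b‖ / ‖ψ b‖) * Real.sqrt (∫ t, ‖ψ t‖ ^ 2 ∂μ)
        + Nb φ ψ b * Real.sqrt ((μ Set.univ).toReal) := by
  set c := ‖φ b‖ / ‖ψ b‖ with hc
  set N := Nb φ ψ b with hNdef
  have hψb : 0 < ‖ψ b‖ :=
    lt_of_le_of_lt (norm_nonneg (ψ (b/2)))
      (hψm (by simp [Set.mem_Ioi]; linarith) (Set.mem_Ioi.2 hb) (by linarith))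
  have hc0 : 0 ≤ c := div_nonneg (norm_nonneg _) (norm_nonneg _)
  -- bound on phib
  obtain ⟨M, hM⟩ := (isCompact_Icc (a := -b) (b := b)).exists_bound_of_continuousOn
    (f := fun t => φ t - (φ b / ψ b) * ψ t)
    ((hφc.sub ((continuous_const).mul hψc)).continuousOn)
  have hbdd : BddAbove (Set.range fun t => ‖phib φ ψ b t‖) := by
    refine ⟨max M 0, ?_⟩
    rintro x ⟨t, rfl⟩
    simp only [phib]
    split
    · exact le_max_of_le_left (hM t (abs_le.1 ‹_›))
    · simp
  have hNle : ∀ t, ‖phib φ ψ b t‖ ≤ N := fun t => le_ciSup hbdd t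
  have hN0 : 0 ≤ N := le_trans (norm_nonneg _) (hNle 0)
  -- pointwise bound
  have hpt : ∀ t : ℝ, ‖φ t‖ ≤ c * ‖ψ t‖ + N := by
    intro t
    have hφa : φ |t| = φ t := by rcases abs_cases t with ⟨h, _⟩ | ⟨h, _⟩ <;> simp [h, hφe]
    have hψa : ψ |t| = ψ t := by rcases abs_cases t with ⟨h, _⟩ | ⟨h, _⟩ <;> simp [h, hψe]
    by_cases ht : |t| ≤ b
    · have hphib : phib φ ψ b t = φ t - (φ b / ψ b) * ψ t := by simp [phib, ht]
      have : φ t = phib φ ψ b t + (φ b / ψ b) * ψ t := by rw [hphib]; ring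
      calc ‖φ t‖ ≤ ‖phib φ ψ b t‖ + ‖(φ b / ψ b) * ψ t‖ := by
            rw [this]; exact norm_add_le _ _
        _ = ‖phib φ ψ b t‖ + c * ‖ψ t‖ := by rw [norm_mul, norm_div]
        _ ≤ c * ‖ψ t‖ + N := by linarith [hNle t]
    · push_neg at ht
      have htpos : (0:ℝ) < |t| := lt_trans hb ht
      have hmem : |t| ∈ Set.Ioi (0:ℝ) := htpos
      have hbm : b ∈ Set.Ioi (0:ℝ) := hb
      have hrat := hratio hbm hmem ht.le
      simp only at hrat
      have hψt : 0 < ‖ψ |t|‖ := lt_trans hψb (hψm hbm hmem ht)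
      rw [div_le_div_iff₀ hψt hψb] at hrat
      have hrat' : ‖φ |t|‖ ≤ c * ‖ψ |t|‖ := by
        rw [hc, div_mul_eq_mul_div, le_div_iff₀ hψb]; linarith
      rw [hφa, hψa] at hrat'
      linarith [mul_nonneg hc0 (norm_nonneg (ψ t))]
  -- integrability setup
  have hψmeas : AEStronglyMeasurable (fun t => ‖ψ t‖) μ := hψc.norm.aestronglyMeasurable
  have hψmem : MemLp (fun t => ‖ψ t‖) 2 μ := (memLp_two_iff_integrable_sq hψmeas).2 hψ2
  have hψint : Integrable (fun t => ‖ψ t‖) μ := hψmem.integrable (by norm_num)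
  have hg2 : (fun t => (c * ‖ψ t‖ + N) ^ 2)
      = fun t => c ^ 2 * ‖ψ t‖ ^ 2 + (2 * c * N) * ‖ψ t‖ + N ^ 2 := by
    funext t; ring
  have hg2int : Integrable (fun t => (c * ‖ψ t‖ + N) ^ 2) μ := by
    rw [hg2]
    exact ((hψ2.const_mul _).add (hψint.const_mul _)).add (integrable_const _)
  have hφ2 : Integrable (fun t => ‖φ t‖ ^ 2) μ := by
    refine Integrable.mono hg2int (hφc.norm.pow 2).aestronglyMeasurable ?_
    filter_upwards with t
    have h1 : (0:ℝ) ≤ ‖φ t‖ := norm_nonneg _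
    have h2 : (0:ℝ) ≤ c * ‖ψ t‖ + N := le_trans h1 (hpt t)
    rw [Real.norm_of_nonneg (by positivity), Real.norm_of_nonneg (by positivity)]
    exact pow_le_pow_left₀ h1 (hpt t) 2
  -- monotone step
  have hmono : ∫ t, ‖φ t‖ ^ 2 ∂μ ≤ ∫ t, (c * ‖ψ t‖ + N) ^ 2 ∂μ := by
    refine integral_mono hφ2 hg2int fun t => ?_
    exact pow_le_pow_left₀ (norm_nonneg _) (hpt t) 2
  -- Cauchy–Schwarz: ∫‖ψ‖ ≤ √(∫‖ψ‖²) √(μ univ)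
  set A := Real.sqrt (∫ t, ‖ψ t‖ ^ 2 ∂μ) with hA
  set B := Real.sqrt ((μ Set.univ).toReal) with hB
  have hA0 : 0 ≤ A := Real.sqrt_nonneg _
  have hB0 : 0 ≤ B := Real.sqrt_nonneg _
  have hCS : ∫ t, ‖ψ t‖ ∂μ ≤ A * B := by
    have hone : MemLp (fun _ : ℝ => (1:ℝ)) (ENNReal.ofReal 2) μ := by
      rw [ENNReal.ofReal_ofNat]; exact memLp_const 1
    have hψmem' : MemLp (fun t => ‖ψ t‖) (ENNReal.ofReal 2) μ := by
      rw [ENNReal.ofReal_ofNat]; exact hψmem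
    have hconj : Real.HolderConjugate 2 2 := Real.holderConjugate_iff.mpr ⟨by norm_num, by norm_num⟩
    have := integral_mul_le_Lp_mul_Lq_of_nonneg hconj
      (Filter.Eventually.of_forall fun t => norm_nonneg (ψ t))
      (Filter.Eventually.of_forall fun _ => zero_le_one) hψmem' hone
    have h2 : ((2:ℝ)) = ((2:ℕ):ℝ) := by norm_num
    simp only [mul_one, h2, Real.rpow_natCast, one_pow, integral_const,
      smul_eq_mul] at this
    rw [hA, hB, Real.sqrt_eq_rpow, Real.sqrt_eq_rpow, one_div]
    simpa [Measure.real] using this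
  have hAsq : A ^ 2 = ∫ t, ‖ψ t‖ ^ 2 ∂μ := by
    rw [hA, Real.sq_sqrt]
    exact integral_nonneg fun t => by positivity
  have hBsq : B ^ 2 = (μ Set.univ).toReal := by
    rw [hB, Real.sq_sqrt ENNReal.toReal_nonneg]
  have hfinal : ∫ t, (c * ‖ψ t‖ + N) ^ 2 ∂μ ≤ (c * A + N * B) ^ 2 := by
    have i1 : Integrable (fun t => c ^ 2 * ‖ψ t‖ ^ 2) μ := hψ2.const_mul _
    have i2 : Integrable (fun t => (2 * c * N) * ‖ψ t‖) μ := hψint.const_mul _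
    have i12 : Integrable (fun t => c ^ 2 * ‖ψ t‖ ^ 2 + (2 * c * N) * ‖ψ t‖) μ := i1.add i2
    have hint : ∫ t, (c * ‖ψ t‖ + N) ^ 2 ∂μ
        = c ^ 2 * (∫ t, ‖ψ t‖ ^ 2 ∂μ) + (2 * c * N) * (∫ t, ‖ψ t‖ ∂μ)
          + N ^ 2 * (μ Set.univ).toReal := by
      rw [hg2, integral_add i12 (integrable_const _), integral_add i1 i2,
        integral_const_mul, integral_const_mul, integral_const, smul_eq_mul, Measure.real]
      ring
    rw [hint, ← hAsq, ← hBsq]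
    have h2cN : 0 ≤ 2 * c * N := by positivity
    have h3 : (2 * c * N) * (∫ t, ‖ψ t‖ ∂μ) ≤ (2 * c * N) * (A * B) :=
      mul_le_mul_of_nonneg_left hCS h2cN
    have hexp : (c * A + N * B) ^ 2 = c ^ 2 * A ^ 2 + (2 * c * N) * (A * B) + N ^ 2 * B ^ 2 := by
      ring
    rw [hexp]
    linarith
  calc Real.sqrt (∫ t, ‖φ t‖ ^ 2 ∂μ)
      ≤ Real.sqrt ((c * A + N * B) ^ 2) :=
        Real.sqrt_le_sqrt (le_trans hmono hfinal)
    _ = c * A + N * B := Real.sqrt_sq (add_nonneg (mul_nonneg hc0 hA0) (mul_nonneg hN0 hB0))
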